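/- Let H and K be complex Hilbert spaces, A, B ∈ B(H) positive invertible operators with mA ≤ B ≤ MA for positive reals m < M, let Φ : B(H) → B(K) be a positive linear map, and let α ∈ (0,1). Then Φ(A) #_α Φ(B) − Φ(A #_α B) ≤ [ (1−α)((M^α − m^α)/(α(M − m)))^{α/(α−1)} − (Mm^α − mM^α)/(M − m) ] Φ(A). -/

import Mathlib

open scoped InnerProductSpace

noncomputable section

/-- The real power `A ^ r` of a (positive) operator, via the continuous functional calculus. -/
noncomputable def opPow {H : Type} [NormedAddCommGroup H] [InnerProductSpace ℂ H]
    [CompleteSpace H] (A : H →L[ℂ] H) (r : ℝ) : H →L[ℂ] H :=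
  cfc (fun t : ℝ => t ^ r) A

/-- The operator mean `A σ B = A^{1/2} f(A^{-1/2} B A^{-1/2}) A^{1/2}` associated with the
representing function `f`. -/
noncomputable def opMean {H : Type} [NormedAddCommGroup H] [InnerProductSpace ℂ H]
    [CompleteSpace H] (f : ℝ → ℝ) (A B : H →L[ℂ] H) : H →L[ℂ] H :=
  opPow A (1/2) * cfc f (opPow A (-(1/2)) * B * opPow A (-(1/2))) * opPow A (1/2)

/-- The weighted geometric mean `A #_α B = A^{1/2} (A^{-1/2} B A^{-1/2})^α A^{1/2}`. -/
noncomputable def geoMean {H : Type} [NormedAddCommGroup H] [InnerProductSpace ℂ H]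
    [CompleteSpace H] (α : ℝ) (A B : H →L[ℂ] H) : H →L[ℂ] H :=
  opMean (fun t : ℝ => t ^ α) A B

/-- `f : (0,∞) → (0,∞)` is operator monotone: for all positive invertible operators `X ≤ Y`
(on any complex Hilbert space), `f(X) ≤ f(Y)` in the Loewner order. -/
def IsOperatorMonotone (f : ℝ → ℝ) : Prop :=
  ∀ (H : Type) [NormedAddCommGroup H] [InnerProductSpace ℂ H] [CompleteSpace H]
    (X Y : H →L[ℂ] H), 0 ≤ X → IsUnit X → 0 ≤ Y → IsUnit Y → X ≤ Y →
      cfc f X ≤ cfc f Y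

section ScalarAux

/-- The chord of `t ^ α` over `[m, M]` lies below the graph. -/
lemma secant_le {m M α : ℝ} (hm : 0 < m) (hM : m < M) (hα : α ∈ Set.Ioo (0:ℝ) 1) :
    ∀ t ∈ Set.Icc m M,
      (M ^ α - m ^ α) / (M - m) * t + (M * m ^ α - m * M ^ α) / (M - m) ≤ t ^ α := by
  intro t ht
  obtain ⟨h1, h2⟩ := ht
  have hMm : (0:ℝ) < M - m := sub_pos.mpr hM
  have ha : 0 ≤ (M - t) / (M - m) := div_nonneg (by linarith) hMm.le
  have hb : 0 ≤ (t - m) / (M - m) := div_nonneg (by linarith) hMm.le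
  have hab : (M - t) / (M - m) + (t - m) / (M - m) = 1 := by field_simp; ring
  have hconc := (Real.concaveOn_rpow hα.1.le hα.2.le).2 (Set.mem_Ici.mpr hm.le)
    (Set.mem_Ici.mpr (hm.trans hM).le) ha hb hab
  simp only [smul_eq_mul] at hconc
  have ht' : (M - t) / (M - m) * m + (t - m) / (M - m) * M = t := by
    field_simp
    ring
  rw [ht'] at hconc
  have heq : (M ^ α - m ^ α) / (M - m) * t + (M * m ^ α - m * M ^ α) / (M - m)
      = (M - t) / (M - m) * m ^ α + (t - m) / (M - m) * M ^ α := by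
    field_simp
    ring
  rw [heq]
  exact hconc

/-- The optimal tangent-type upper bound for `t ^ α` on `[0, ∞)`. -/
lemma tangent_le {m M α : ℝ} (hm : 0 < m) (hM : m < M) (hα : α ∈ Set.Ioo (0:ℝ) 1) :
    ∀ t : ℝ, 0 ≤ t → t ^ α ≤ (M ^ α - m ^ α) / (M - m) * t +
      (1 - α) * ((M ^ α - m ^ α) / (α * (M - m))) ^ (α / (α - 1)) := by
  obtain ⟨hα0, hα1⟩ := hα
  set μ := (M ^ α - m ^ α) / (M - m) with hμdef
  have hμ : 0 < μ :=
    div_pos (sub_pos.mpr (Real.rpow_lt_rpow hm.le hM hα0)) (sub_pos.mpr hM)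
  have hμα : 0 < μ / α := div_pos hμ hα0
  set t0 := (μ / α) ^ ((1:ℝ) / (α - 1)) with ht0def
  have ht0 : 0 < t0 := Real.rpow_pos_of_pos hμα _
  have hαne : α - 1 ≠ 0 := by linarith
  have hp1 : α * t0 ^ (α - 1) = μ := by
    rw [ht0def, ← Real.rpow_mul hμα.le, one_div, inv_mul_cancel₀ hαne, Real.rpow_one]
    field_simp
  have hp2 : t0 ^ α = (μ / α) ^ (α / (α - 1)) := by
    rw [ht0def, ← Real.rpow_mul hμα.le, one_div, inv_mul_eq_div]
  intro t ht
  have hAM := Real.geom_mean_le_arith_mean2_weighted hα0.le (by linarith : (0:ℝ) ≤ 1 - α)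
    ht ht0.le (by ring)
  have hkey : t ^ α = t ^ α * t0 ^ (1 - α) * t0 ^ (α - 1) := by
    rw [mul_assoc, ← Real.rpow_add ht0]
    norm_num
  have h3 : t0 * t0 ^ (α - 1) = t0 ^ α := by
    nth_rewrite 1 [← Real.rpow_one t0]
    rw [← Real.rpow_add ht0]
    congr 1
    ring
  have hpos : (0:ℝ) ≤ t0 ^ (α - 1) := (Real.rpow_pos_of_pos ht0 _).le
  calc t ^ α = t ^ α * t0 ^ (1 - α) * t0 ^ (α - 1) := hkey
    _ ≤ (α * t + (1 - α) * t0) * t0 ^ (α - 1) := mul_le_mul_of_nonneg_right hAM hpos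
    _ = (α * t0 ^ (α - 1)) * t + (1 - α) * (t0 * t0 ^ (α - 1)) := by ring
    _ = μ * t + (1 - α) * ((μ / α) ^ (α / (α - 1))) := by rw [hp1, h3, hp2]
    _ = μ * t + (1 - α) * ((M ^ α - m ^ α) / (α * (M - m))) ^ (α / (α - 1)) := by
        rw [hμdef, div_div, mul_comm (M - m) α]

end ScalarAux

section OpAux

variable {E : Type} [NormedAddCommGroup E] [InnerProductSpace ℂ E] [CompleteSpace E]

lemma contOn_rpow (r : ℝ) (s : Set ℝ) (hs : ∀ x ∈ s, x ≠ 0) :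
    ContinuousOn (fun t : ℝ => t ^ r) s :=
  fun x hx => (Real.continuousAt_rpow_const x r (Or.inl (hs x hx))).continuousWithinAt

lemma contOn_rpow_nonneg {r : ℝ} (hr : 0 ≤ r) (s : Set ℝ) :
    ContinuousOn (fun t : ℝ => t ^ r) s :=
  fun x _ => (Real.continuousAt_rpow_const x r (Or.inr hr)).continuousWithinAt

lemma opPow_isSelfAdjoint (T : E →L[ℂ] E) (r : ℝ) : IsSelfAdjoint (opPow T r) :=
  cfc_predicate _ T

lemma spectrum_nonneg_of_op {T : E →L[ℂ] E} (hT : 0 ≤ T) :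
    ∀ x ∈ spectrum ℝ T, 0 ≤ x := fun x hx => spectrum_nonneg_of_nonneg hT hx

lemma spectrum_pos_of_op {T : E →L[ℂ] E} (hT : 0 ≤ T) (hTu : IsUnit T) :
    ∀ x ∈ spectrum ℝ T, 0 < x := fun x hx =>
  lt_of_le_of_ne (spectrum_nonneg_of_op hT x hx)
    (by rintro rfl; exact (spectrum.zero_mem_iff ℝ).mp hx hTu)

lemma smul_nonneg_op {T : E →L[ℂ] E} (hT : 0 ≤ T) {r : ℝ} (hr : 0 ≤ r) : 0 ≤ r • T := by
  have hsa : IsSelfAdjoint T := .of_nonneg hT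
  rw [← cfc_smul_id (R := ℝ) r T hsa]
  exact cfc_nonneg fun x hx => smul_nonneg hr (spectrum_nonneg_of_op hT x hx)

lemma opPow_mul_opPow {T : E →L[ℂ] E} (hT : 0 ≤ T) (hTu : IsUnit T) (r s : ℝ) :
    opPow T r * opPow T s = opPow T (r + s) := by
  have hspec := spectrum_pos_of_op hT hTu
  have hc : ∀ u : ℝ, ContinuousOn (fun t : ℝ => t ^ u) (spectrum ℝ T) :=
    fun u => contOn_rpow u _ (fun x hx => (hspec x hx).ne')
  rw [opPow, opPow, opPow, ← cfc_mul _ _ T (hc r) (hc s)]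
  exact cfc_congr fun x hx => (Real.rpow_add (hspec x hx) r s).symm

lemma opPow_zero {T : E →L[ℂ] E} (hsa : IsSelfAdjoint T) : opPow T 0 = 1 := by
  rw [opPow, cfc_congr (g := fun _ : ℝ => (1:ℝ)) (fun x _ => Real.rpow_zero x),
    cfc_const_one ℝ T]

lemma opPow_half_mul_self {T : E →L[ℂ] E} (hT : 0 ≤ T) :
    opPow T (1/2) * opPow T (1/2) = T := by
  have hsa : IsSelfAdjoint T := .of_nonneg hT
  have hc : ContinuousOn (fun t : ℝ => t ^ (1/2 : ℝ)) (spectrum ℝ T) :=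
    contOn_rpow_nonneg (by norm_num) _
  rw [opPow, ← cfc_mul _ _ T hc hc]
  calc cfc (fun t : ℝ => t ^ (1/2:ℝ) * t ^ (1/2:ℝ)) T = cfc (id : ℝ → ℝ) T := by
        refine cfc_congr fun x hx => ?_
        have hx0 : (0:ℝ) ≤ x := spectrum_nonneg_of_op hT x hx
        rw [← Real.rpow_add' hx0 (by norm_num : (1/2:ℝ) + 1/2 ≠ 0)]
        norm_num
    _ = T := cfc_id ℝ T

lemma cfc_linear {T : E →L[ℂ] E} (hsa : IsSelfAdjoint T) (a b : ℝ) :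
    cfc (fun t : ℝ => a * t + b) T = a • T + b • 1 := by
  have h1 : cfc (fun t : ℝ => a * t + b) T
      = cfc (fun t : ℝ => a * t) T + cfc (fun _ : ℝ => b) T :=
    cfc_add (a := T) (f := fun t : ℝ => a * t) (g := fun _ : ℝ => b) (by fun_prop) (by fun_prop)
  rw [h1, cfc_const_mul_id a T hsa, cfc_const b T hsa, Algebra.algebraMap_eq_smul_one]

/-- Support projection lemma: if `0 ≤ Q ≤ M • P` then `E Q E = Q` where
`E = P^{1/2} P^{-1/2}` is the support projection of `P`. -/
lemma support_conj {P Q : E →L[ℂ] E} (hP : 0 ≤ P) (hQ : 0 ≤ Q) {M : ℝ} (hQP : Q ≤ M • P)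
    (hcont : ContinuousOn (fun t : ℝ => t ^ (-(1/2) : ℝ)) (spectrum ℝ P)) :
    (cfc (fun t : ℝ => t ^ (1/2:ℝ) * t ^ (-(1/2):ℝ)) P) * Q *
      (cfc (fun t : ℝ => t ^ (1/2:ℝ) * t ^ (-(1/2):ℝ)) P) = Q := by
  have hsaP : IsSelfAdjoint P := .of_nonneg hP
  set e := fun t : ℝ => t ^ (1/2:ℝ) * t ^ (-(1/2):ℝ) with he
  set E' := cfc e P with hE'def
  have hce : ContinuousOn e (spectrum ℝ P) :=
    (contOn_rpow_nonneg (by norm_num) _).mul hcont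
  have hsaE : IsSelfAdjoint E' := cfc_predicate e P
  have hF : IsSelfAdjoint (1 - E') := (IsSelfAdjoint.one (E →L[ℂ] E)).sub hsaE
  have hEP : E' * P = P := by
    have h : E' * P = cfc e P * cfc (id : ℝ → ℝ) P := by rw [cfc_id ℝ P hsaP]
    rw [h, ← cfc_mul e id P hce (by fun_prop)]
    refine (cfc_congr fun x hx => ?_).trans (cfc_id ℝ P hsaP)
    have hx0 : (0:ℝ) ≤ x := spectrum_nonneg_of_op hP x hx
    rcases hx0.lt_or_eq with h' | h'
    · simp only [he, id]
      rw [← Real.rpow_add h']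
      norm_num
    · simp [he, ← h', Real.zero_rpow (by norm_num : (1/2:ℝ) ≠ 0)]
  have hFP : (1 - E') * P = 0 := by rw [sub_mul, one_mul, hEP, sub_self]
  have hFPF : (1 - E') * P * (1 - E') = 0 := by rw [hFP, zero_mul]
  have hFQF : (1 - E') * Q * (1 - E') = 0 := by
    have hle := star_left_conjugate_le_conjugate hQP (1 - E')
    rw [hF.star_eq] at hle
    have heq : (1 - E') * (M • P) * (1 - E') = M • ((1 - E') * P * (1 - E')) := by
      rw [mul_smul_comm, smul_mul_assoc]
    rw [heq, hFPF, smul_zero] at hle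
    have hge := star_left_conjugate_nonneg hQ (1 - E')
    rw [hF.star_eq] at hge
    exact le_antisymm hle hge
  have hQF : Q * (1 - E') = 0 := by
    set R := CFC.sqrt Q with hRdef
    have hR : R * R = Q := CFC.sqrt_mul_sqrt_self Q hQ
    have hRsa : IsSelfAdjoint R := .of_nonneg (CFC.sqrt_nonneg Q)
    have h0 : star (R * (1 - E')) * (R * (1 - E')) = 0 := by
      rw [star_mul, hRsa.star_eq, hF.star_eq]
      calc (1 - E') * R * (R * (1 - E')) = (1 - E') * (R * R) * (1 - E') := by
            simp only [mul_assoc]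
        _ = 0 := by rw [hR, hFQF]
    have hRF : R * (1 - E') = 0 := (CStarRing.star_mul_self_eq_zero_iff _).mp h0
    rw [← hR, mul_assoc, hRF, mul_zero]
  have hFQ : (1 - E') * Q = 0 := by
    have h := congrArg star hQF
    rwa [star_mul, star_zero, hF.star_eq, (IsSelfAdjoint.of_nonneg hQ).star_eq] at h
  have h1 : E' * Q = Q := by
    rw [sub_mul, one_mul] at hFQ
    exact (sub_eq_zero.mp hFQ).symm
  have h2 : Q * E' = Q := by
    rw [mul_sub, mul_one] at hQF
    exact (sub_eq_zero.mp hQF).symm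
  rw [h1, h2]

end OpAux

set_option maxHeartbeats 2000000 in
/-- **Reverse Ando inequality of the second type (Seo).** -/
theorem stmt_6 {H K : Type} [NormedAddCommGroup H] [InnerProductSpace ℂ H] [CompleteSpace H]
    [NormedAddCommGroup K] [InnerProductSpace ℂ K] [CompleteSpace K]
    (A B : H →L[ℂ] H) (hA : 0 ≤ A) (hAu : IsUnit A) (hB : 0 ≤ B) (hBu : IsUnit B)
    (m M : ℝ) (hm : 0 < m) (hM : m < M)
    (h₁ : m • A ≤ B) (h₂ : B ≤ M • A)
    (Φ : (H →L[ℂ] H) →ₗ[ℂ] (K →L[ℂ] K))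
    (hΦ : ∀ X : H →L[ℂ] H, 0 ≤ X → 0 ≤ Φ X)
    (α : ℝ) (hα : α ∈ Set.Ioo (0 : ℝ) 1) :
    geoMean α (Φ A) (Φ B) - Φ (geoMean α A B) ≤
      ((1 - α) * ((M ^ α - m ^ α) / (α * (M - m))) ^ (α / (α - 1)) -
        (M * m ^ α - m * M ^ α) / (M - m)) • Φ A := by
  obtain ⟨hα0, hα1⟩ := hα
  rcases subsingleton_or_nontrivial (K →L[ℂ] K) with hK | hK
  · exact le_of_eq (Subsingleton.elim _ _)
  set μ := (M ^ α - m ^ α) / (M - m) with hμdef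
  set ν := (M * m ^ α - m * M ^ α) / (M - m) with hνdef
  set cst := (1 - α) * ((M ^ α - m ^ α) / (α * (M - m))) ^ (α / (α - 1)) with hcstdef
  have hμ : 0 < μ :=
    div_pos (sub_pos.mpr (Real.rpow_lt_rpow hm.le hM hα0)) (sub_pos.mpr hM)
  have hcst0 : 0 ≤ cst := by
    rw [hcstdef]
    apply mul_nonneg (by linarith)
    apply Real.rpow_nonneg
    apply div_nonneg (sub_nonneg.mpr (Real.rpow_le_rpow hm.le hM.le hα0.le))
    apply mul_nonneg hα0.le (by linarith)
  -- H-side computations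
  have hsaA : IsSelfAdjoint A := .of_nonneg hA
  have hsaB : IsSelfAdjoint B := .of_nonneg hB
  set Ah := opPow A (1/2) with hAh
  set Ai := opPow A (-(1/2)) with hAi
  set X := Ai * B * Ai with hX
  have hgeoA : geoMean α A B = Ah * cfc (fun t : ℝ => t ^ α) X * Ah := rfl
  have hsaAh : IsSelfAdjoint Ah := opPow_isSelfAdjoint A _
  have hsaAi : IsSelfAdjoint Ai := opPow_isSelfAdjoint A _
  have hAhAi : Ah * Ai = 1 := by
    rw [hAh, hAi, opPow_mul_opPow hA hAu]
    rw [show (1/2 : ℝ) + -(1/2) = 0 by norm_num, opPow_zero hsaA]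
  have hAiAh : Ai * Ah = 1 := by
    rw [hAh, hAi, opPow_mul_opPow hA hAu]
    rw [show (-(1/2) : ℝ) + 1/2 = 0 by norm_num, opPow_zero hsaA]
  have hAhAh : Ah * Ah = A := by rw [hAh]; exact opPow_half_mul_self hA
  have hsaX : IsSelfAdjoint X := by
    rw [hX, IsSelfAdjoint, star_mul, star_mul, hsaAi.star_eq, hsaB.star_eq, mul_assoc]
  have hX0 : 0 ≤ X := by
    have h := star_left_conjugate_nonneg hB Ai
    rwa [hsaAi.star_eq] at h
  have hAXA : Ah * X * Ah = B := by
    rw [hX]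
    calc Ah * (Ai * B * Ai) * Ah = (Ah * Ai) * B * (Ai * Ah) := by simp only [mul_assoc]
      _ = B := by rw [hAhAi, hAiAh, one_mul, mul_one]
  have hAIA : Ai * A * Ai = 1 := by
    calc Ai * A * Ai = Ai * (Ah * Ah) * Ai := by rw [hAhAh]
      _ = (Ai * Ah) * (Ah * Ai) := by simp only [mul_assoc]
      _ = 1 := by rw [hAiAh, hAhAi, one_mul]
  have hmX : m • (1 : H →L[ℂ] H) ≤ X := by
    have h := star_left_conjugate_le_conjugate h₁ Ai
    rw [hsaAi.star_eq] at h
    calc m • (1 : H →L[ℂ] H) = m • (Ai * A * Ai) := by rw [hAIA]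
      _ = Ai * (m • A) * Ai := by rw [mul_smul_comm, smul_mul_assoc]
      _ ≤ Ai * B * Ai := h
      _ = X := hX.symm
  have hXM : X ≤ M • (1 : H →L[ℂ] H) := by
    have h := star_left_conjugate_le_conjugate h₂ Ai
    rw [hsaAi.star_eq] at h
    calc X = Ai * B * Ai := hX
      _ ≤ Ai * (M • A) * Ai := h
      _ = M • (Ai * A * Ai) := by rw [mul_smul_comm, smul_mul_assoc]
      _ = M • 1 := by rw [hAIA]
  have hspecX : ∀ x ∈ spectrum ℝ X, x ∈ Set.Icc m M := by
    intro x hx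
    constructor
    · exact (algebraMap_le_iff_le_spectrum (R := ℝ) (a := X) hsaX).mp
        (by rw [Algebra.algebraMap_eq_smul_one]; exact hmX) x hx
    · exact (le_algebraMap_iff_spectrum_le (R := ℝ) (a := X) hsaX).mp
        (by rw [Algebra.algebraMap_eq_smul_one]; exact hXM) x hx
  have hsec : cfc (fun t : ℝ => μ * t + ν) X ≤ cfc (fun t : ℝ => t ^ α) X :=
    cfc_mono (fun x hx => secant_le hm hM ⟨hα0, hα1⟩ x (hspecX x hx))
      (by fun_prop) (contOn_rpow_nonneg hα0.le _)
  have hXineq : μ • X + ν • (1 : H →L[ℂ] H) ≤ cfc (fun t : ℝ => t ^ α) X := by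
    rw [← cfc_linear hsaX μ ν]
    exact hsec
  have hstepA : μ • B + ν • A ≤ geoMean α A B := by
    have h := star_left_conjugate_le_conjugate hXineq Ah
    rw [hsaAh.star_eq] at h
    have hl : Ah * (μ • X + ν • (1 : H →L[ℂ] H)) * Ah = μ • B + ν • A := by
      simp only [mul_add, add_mul, mul_smul_comm, smul_mul_assoc, mul_one]
      rw [hAXA, hAhAh]
    rw [hl, ← hgeoA] at h
    exact h
  have Φmono : ∀ {U V : H →L[ℂ] H}, U ≤ V → Φ U ≤ Φ V := by
    intro U V hUV
    have h := hΦ (V - U) (sub_nonneg.mpr hUV)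
    rw [map_sub] at h
    exact sub_nonneg.mp h
  have Φsmul : ∀ (r : ℝ) (Z : H →L[ℂ] H), Φ (r • Z) = r • Φ Z := fun r Z =>
    Φ.map_smul_of_tower r Z
  have hstepA' : μ • Φ B + ν • Φ A ≤ Φ (geoMean α A B) := by
    have h := Φmono hstepA
    rwa [map_add, Φsmul, Φsmul] at h
  -- K-side
  have hP : 0 ≤ Φ A := hΦ A hA
  have hQ : 0 ≤ Φ B := hΦ B hB
  have hQM : Φ B ≤ M • Φ A := by
    have h := Φmono h₂
    rwa [Φsmul] at h
  set P := Φ A with hPdef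
  set Q := Φ B with hQdef
  set Ph := opPow P (1/2) with hPh
  set Pi := opPow P (-(1/2)) with hPi
  set Y := Pi * Q * Pi with hY
  have hgeoP : geoMean α P Q = Ph * cfc (fun t : ℝ => t ^ α) Y * Ph := rfl
  have hsaPh : IsSelfAdjoint Ph := opPow_isSelfAdjoint P _
  have hsaPi : IsSelfAdjoint Pi := opPow_isSelfAdjoint P _
  have hsaP : IsSelfAdjoint P := .of_nonneg hP
  have hY0 : 0 ≤ Y := by
    have h := star_left_conjugate_nonneg hQ Pi
    rwa [hsaPi.star_eq] at h
  have hsaY : IsSelfAdjoint Y := .of_nonneg hY0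
  have hYle : cfc (fun t : ℝ => t ^ α) Y ≤ μ • Y + cst • 1 := by
    rw [← cfc_linear hsaY μ cst]
    exact cfc_mono
      (fun x hx => tangent_le hm hM ⟨hα0, hα1⟩ x (spectrum_nonneg_of_op hY0 x hx))
      (contOn_rpow_nonneg hα0.le _) (by fun_prop)
  have hconj : Ph * cfc (fun t : ℝ => t ^ α) Y * Ph ≤ μ • (Ph * Y * Ph) + cst • P := by
    have h := star_left_conjugate_le_conjugate hYle Ph
    rw [hsaPh.star_eq] at h
    have hr : Ph * (μ • Y + cst • (1 : K →L[ℂ] K)) * Ph = μ • (Ph * Y * Ph) + cst • P := by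
      simp only [mul_add, add_mul, mul_smul_comm, smul_mul_assoc, mul_one]
      rw [hPh, opPow_half_mul_self hP]
    rw [hr] at h
    exact h
  have hstepB : geoMean α P Q ≤ μ • Q + cst • P := by
    by_cases hcont : ContinuousOn (fun t : ℝ => t ^ (-(1/2) : ℝ)) (spectrum ℝ P)
    · have hPhPi : Ph * Pi = cfc (fun t : ℝ => t ^ (1/2:ℝ) * t ^ (-(1/2):ℝ)) P := by
        rw [hPh, hPi, opPow, opPow,
          ← cfc_mul _ _ P (contOn_rpow_nonneg (by norm_num) _) hcont]
      have hPiPh : Pi * Ph = cfc (fun t : ℝ => t ^ (1/2:ℝ) * t ^ (-(1/2):ℝ)) P := by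
        rw [hPh, hPi, opPow, opPow,
          ← cfc_mul _ _ P hcont (contOn_rpow_nonneg (by norm_num) _)]
        exact cfc_congr fun x _ => mul_comm _ _
      have hPYP : Ph * Y * Ph = Q := by
        rw [hY]
        calc Ph * (Pi * Q * Pi) * Ph = (Ph * Pi) * Q * (Pi * Ph) := by simp only [mul_assoc]
          _ = Q := by rw [hPhPi, hPiPh]; exact support_conj hP hQ hQM hcont
      calc geoMean α P Q = Ph * cfc (fun t : ℝ => t ^ α) Y * Ph := hgeoP
        _ ≤ μ • (Ph * Y * Ph) + cst • P := hconj
        _ = μ • Q + cst • P := by rw [hPYP]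
    · have hPi0 : Pi = 0 := by
        rw [hPi, opPow]
        exact cfc_apply_of_not_continuousOn P hcont
      have hYzero : Y = 0 := by rw [hY, hPi0, zero_mul, mul_zero]
      have hcfc0 : cfc (fun t : ℝ => t ^ α) (0 : K →L[ℂ] K) = 0 := by
        have hs : spectrum ℝ (0 : K →L[ℂ] K) = {0} := spectrum.zero_eq
        have hcongr : cfc (fun t : ℝ => t ^ α) (0 : K →L[ℂ] K) = cfc (fun _ : ℝ => (0:ℝ)) 0 := by
          refine cfc_congr ?_
          intro x hx
          rw [hs, Set.mem_singleton_iff] at hx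
          subst hx
          exact Real.zero_rpow hα0.ne'
        rw [hcongr, cfc_const 0 0 (IsSelfAdjoint.zero _), map_zero]
      have hzero : geoMean α P Q = 0 := by
        rw [hgeoP, hYzero, hcfc0, mul_zero, zero_mul]
      rw [hzero]
      exact add_nonneg (smul_nonneg_op hQ hμ.le) (smul_nonneg_op hP hcst0)
  calc geoMean α P Q - Φ (geoMean α A B)
      ≤ (μ • Q + cst • P) - (μ • Q + ν • P) := sub_le_sub hstepB hstepA'
    _ = (cst - ν) • P := by rw [sub_smul]; abel
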